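/- Fix an integer d ≥ 2, an index 0 ≤ i ≤ d, and κ as below with κ'(1) > 1. Then, as L → ∞, κ'(1)^{−Ld/2}·M_i(L) converges to A_i · (η_1(κ'(1)−1))^{−d/2}, where A_i := (2√π / Γ((d+1)/2)) · ∫_{ℝ^d} Π(λ)·𝟙_{O_i}(λ)·f_{1/2}(λ) dλ. (High-disorder regime of Theorem 3.2: the Kac–Rice expression grows exponentially in the depth L.) -/

import Mathlib

open MeasureTheory Filter Real Topology

/-- `K_d := 2^{d/2} ∏_{j=1}^d Γ(j/2)`. -/
noncomputable def Kd (d : ℕ) : ℝ :=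
  2 ^ ((d : ℝ) / 2) * ∏ j ∈ Finset.Icc 1 d, Real.Gamma ((j : ℝ) / 2)

/-- `Π(λ) := ∏_{j=1}^d |λ_j|`. -/
noncomputable def PiAbs (d : ℕ) (lam : Fin d → ℝ) : ℝ := ∏ j, |lam j|

/-- `Δ(λ) := ∏_{1 ≤ h < k ≤ d} |λ_h − λ_k|`. -/
noncomputable def DeltaV (d : ℕ) (lam : Fin d → ℝ) : ℝ :=
  ∏ h : Fin d, ∏ k : Fin d, if h < k then |lam h - lam k| else 1

/-- The density of the ordered eigenvalues of a GOI(c) matrix. -/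
noncomputable def fGOI (d : ℕ) (c : ℝ) (lam : Fin d → ℝ) : ℝ :=
  (Kd d * Real.sqrt (1 + d * c))⁻¹ * DeltaV d lam *
    Real.exp (-(∑ j, lam j ^ 2) / 2 + c * (∑ j, lam j) ^ 2 / (2 * (1 + d * c))) *
    Set.indicator {x : Fin d → ℝ | Monotone x} (fun _ => 1) lam

/-- `O_i := {λ : λ_i < 0 < λ_{i+1}}` with conventions `λ_0 = −∞`, `λ_{d+1} = +∞`
(one-based indexing; coordinates here are zero-based). -/
def Oi (d i : ℕ) : Set (Fin d → ℝ) :=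
  {lam | (∀ j : Fin d, (j : ℕ) + 1 = i → lam j < 0) ∧ (∀ j : Fin d, (j : ℕ) = i → 0 < lam j)}

/-- `∫_{ℝ^d} Π(λ)·𝟙_{O_i}(λ)·f_c(λ) dλ`. -/
noncomputable def GOIint (d i : ℕ) (c : ℝ) : ℝ :=
  ∫ lam : Fin d → ℝ,
    PiAbs d lam * Set.indicator (Oi d i) (fun _ => 1) lam * fGOI d c lam

/-- `η_L := κ_L'(1)/κ_L''(1)` where `κ_L` is the `L`-fold iterate of `κ`. -/
noncomputable def etaL (κ : ℝ → ℝ) (L : ℕ) : ℝ :=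
  deriv (κ^[L]) 1 / deriv (deriv (κ^[L])) 1

/-- The Kac–Rice expression for the expected number of critical points of index `i`
of the depth-`L` limiting field on `S^d`. -/
noncomputable def Mcrit (d i : ℕ) (κ : ℝ → ℝ) (L : ℕ) : ℝ :=
  2 * Real.sqrt π / Real.Gamma (((d : ℝ) + 1) / 2) * etaL κ L ^ (-(d : ℝ) / 2) *
    GOIint d i ((1 + etaL κ L) / 2)



lemma contDiff_iter {κ : ℝ → ℝ} (hsmooth : ContDiff ℝ 2 κ) : ∀ L : ℕ, ContDiff ℝ 2 (κ^[L])
  | 0 => contDiff_id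
  | L + 1 => by rw [Function.iterate_succ']; exact hsmooth.comp (contDiff_iter hsmooth L)

lemma diff_iter {κ : ℝ → ℝ} (hsmooth : ContDiff ℝ 2 κ) (L : ℕ) : Differentiable ℝ (κ^[L]) :=
  (contDiff_iter hsmooth L).differentiable (by norm_num)

lemma diff_deriv_iter {κ : ℝ → ℝ} (hsmooth : ContDiff ℝ 2 κ) (L : ℕ) : Differentiable ℝ (deriv (κ^[L])) := by
  have h2 : ContDiff ℝ (1 + 1) (κ^[L]) := by norm_num; exact contDiff_iter hsmooth L
  exact ((contDiff_succ_iff_deriv.mp h2).2.2).differentiable (by norm_num)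

lemma iter_fix {κ : ℝ → ℝ} (hfix : κ 1 = 1) (L : ℕ) : κ^[L] 1 = 1 := Function.iterate_fixed hfix L

lemma deriv_iter_one {κ : ℝ → ℝ} (hsmooth : ContDiff ℝ 2 κ) (hfix : κ 1 = 1) : ∀ L : ℕ, deriv (κ^[L]) 1 = deriv κ 1 ^ L
  | 0 => by simp
  | L + 1 => by
    rw [Function.iterate_succ',
      deriv_comp 1 ((hsmooth.differentiable (by norm_num)) _) ((diff_iter hsmooth L) 1),
      iter_fix hfix, deriv_iter_one hsmooth hfix L]
    ring

lemma deriv_comp_fun {κ : ℝ → ℝ} (hsmooth : ContDiff ℝ 2 κ) (L : ℕ) :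
    deriv (κ ∘ κ^[L]) = fun x => deriv κ (κ^[L] x) * deriv (κ^[L]) x :=
  funext fun x => deriv_comp x ((hsmooth.differentiable (by norm_num)) _) ((diff_iter hsmooth L) x)

lemma deriv2_iter {κ : ℝ → ℝ} (hsmooth : ContDiff ℝ 2 κ) (hfix : κ 1 = 1) : ∀ L : ℕ,
    deriv κ 1 * deriv (deriv (κ^[L])) 1
      = deriv (deriv κ) 1 * deriv κ 1 ^ L * ∑ k ∈ Finset.range L, deriv κ 1 ^ k
  | 0 => by
    have : deriv (id : ℝ → ℝ) = fun _ => 1 := funext fun x => deriv_id x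
    simp [Function.iterate_zero, this]
  | L + 1 => by
    have hκd : Differentiable ℝ κ := hsmooth.differentiable (by norm_num)
    have hg : Differentiable ℝ (κ^[L]) := diff_iter hsmooth L
    have hdκ : Differentiable ℝ (deriv κ) := by
      have h2 : ContDiff ℝ (1 + 1) κ := by norm_num; exact hsmooth
      exact ((contDiff_succ_iff_deriv.mp h2).2.2).differentiable (by norm_num)
    have hdg : Differentiable ℝ (deriv (κ^[L])) := diff_deriv_iter hsmooth L
    rw [Function.iterate_succ', deriv_comp_fun hsmooth]
    have h1 : DifferentiableAt ℝ (fun x => deriv κ (κ^[L] x)) 1 :=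
      (hdκ _).comp 1 (hg 1)
    rw [deriv_fun_mul h1 (hdg 1)]
    have h2 : deriv (fun x => deriv κ (κ^[L] x)) 1
        = deriv (deriv κ) (κ^[L] 1) * deriv (κ^[L]) 1 :=
      deriv_comp 1 (hdκ _) (hg 1)
    rw [h2, iter_fix hfix, deriv_iter_one hsmooth hfix L]
    have hrec := deriv2_iter hsmooth hfix L
    rw [Finset.sum_range_succ]
    linear_combination deriv κ 1 * hrec

lemma Kd_pos (d : ℕ) : 0 < Kd d := by
  unfold Kd
  apply mul_pos (rpow_pos_of_pos two_pos _)
  refine Finset.prod_pos fun j hj => Real.Gamma_pos_of_pos ?_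
  have h1 := (Finset.mem_Icc.mp hj).1
  have : (0:ℝ) < j := by exact_mod_cast h1
  positivity

lemma PiAbs_nonneg (d : ℕ) (lam : Fin d → ℝ) : 0 ≤ PiAbs d lam :=
  Finset.prod_nonneg fun j _ => abs_nonneg _

lemma DeltaV_nonneg (d : ℕ) (lam : Fin d → ℝ) : 0 ≤ DeltaV d lam :=
  Finset.prod_nonneg fun h _ => Finset.prod_nonneg fun k _ => by
    split_ifs
    · exact abs_nonneg _
    · norm_num

lemma fGOI_nonneg (d : ℕ) (c : ℝ) (lam : Fin d → ℝ) : 0 ≤ fGOI d c lam := by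
  unfold fGOI
  have h1 : (0:ℝ) ≤ (Kd d * Real.sqrt (1 + d * c))⁻¹ :=
    inv_nonneg.mpr (mul_nonneg (Kd_pos d).le (Real.sqrt_nonneg _))
  have h2 : (0:ℝ) ≤ Set.indicator {x : Fin d → ℝ | Monotone x} (fun _ => 1) lam :=
    Set.indicator_nonneg (fun _ _ => by norm_num) _
  have := DeltaV_nonneg d lam
  positivity

lemma measurable_PiAbs (d : ℕ) : Measurable (PiAbs d) :=
  Finset.measurable_prod _ fun j _ => (measurable_pi_apply j).abs

lemma measurable_DeltaV (d : ℕ) : Measurable (DeltaV d) := by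
  refine Finset.measurable_prod _ fun h _ => Finset.measurable_prod _ fun k _ => ?_
  by_cases hk : h < k
  · simp only [if_pos hk]
    exact ((measurable_pi_apply h).sub (measurable_pi_apply k)).abs
  · simp only [if_neg hk]; exact measurable_const

lemma measurableSet_mono (d : ℕ) : MeasurableSet {x : Fin d → ℝ | Monotone x} := by
  have heq : {x : Fin d → ℝ | Monotone x}
      = ⋂ (j : Fin d), ⋂ (k : Fin d), {x : Fin d → ℝ | j ≤ k → x j ≤ x k} := by
    ext x
    simp only [Set.mem_setOf_eq, Set.mem_iInter]
    exact ⟨fun h j k hk => h hk, fun h _ _ hk => h _ _ hk⟩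
  rw [heq]
  refine MeasurableSet.iInter fun j => MeasurableSet.iInter fun k => ?_
  by_cases hjk : j ≤ k
  · have : {x : Fin d → ℝ | j ≤ k → x j ≤ x k} = {x : Fin d → ℝ | x j ≤ x k} := by
      ext x; simp [hjk]
    rw [this]
    exact measurableSet_le (measurable_pi_apply _) (measurable_pi_apply _)
  · have : {x : Fin d → ℝ | j ≤ k → x j ≤ x k} = Set.univ := by
      ext x; simp [hjk]
    rw [this]; exact MeasurableSet.univ

lemma measurableSet_Oi (d i : ℕ) : MeasurableSet (Oi d i) := by
  have heq : Oi d i = (⋂ (j : Fin d), {lam : Fin d → ℝ | (j : ℕ) + 1 = i → lam j < 0})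
      ∩ (⋂ (j : Fin d), {lam : Fin d → ℝ | (j : ℕ) = i → 0 < lam j}) := by
    ext lam
    simp only [Oi, Set.mem_setOf_eq, Set.mem_inter_iff, Set.mem_iInter]
  rw [heq]
  apply MeasurableSet.inter
  · refine MeasurableSet.iInter fun j => ?_
    by_cases hj : (j : ℕ) + 1 = i
    · have : {lam : Fin d → ℝ | (j : ℕ) + 1 = i → lam j < 0}
          = {lam : Fin d → ℝ | lam j < 0} := by ext lam; simp [hj]
      rw [this]
      exact measurableSet_lt (measurable_pi_apply _) measurable_const
    · have : {lam : Fin d → ℝ | (j : ℕ) + 1 = i → lam j < 0} = Set.univ := by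
        ext lam; simp [hj]
      rw [this]; exact MeasurableSet.univ
  · refine MeasurableSet.iInter fun j => ?_
    by_cases hj : (j : ℕ) = i
    · have : {lam : Fin d → ℝ | (j : ℕ) = i → 0 < lam j}
          = {lam : Fin d → ℝ | 0 < lam j} := by ext lam; simp [hj]
      rw [this]
      exact measurableSet_lt measurable_const (measurable_pi_apply _)
    · have : {lam : Fin d → ℝ | (j : ℕ) = i → 0 < lam j} = Set.univ := by
        ext lam; simp [hj]
      rw [this]; exact MeasurableSet.univ

lemma measurable_fGOI (d : ℕ) (c : ℝ) : Measurable (fGOI d c) := by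
  unfold fGOI
  refine Measurable.mul (Measurable.mul (measurable_const.mul (measurable_DeltaV d)) ?_) ?_
  · apply Measurable.exp
    apply Measurable.add
    · exact ((Finset.measurable_sum _ fun j _ => (measurable_pi_apply j).pow_const 2).neg).div_const 2
    · exact ((Finset.measurable_sum _ fun j _ => measurable_pi_apply j).pow_const 2).const_mul c |>.div_const _
  · exact Measurable.indicator measurable_const (measurableSet_mono d)

lemma measurable_integrand (d i : ℕ) (c : ℝ) :
    Measurable (fun lam : Fin d → ℝ =>
      PiAbs d lam * Set.indicator (Oi d i) (fun _ => 1) lam * fGOI d c lam) :=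
  ((measurable_PiAbs d).mul
    (Measurable.indicator measurable_const (measurableSet_Oi d i))).mul (measurable_fGOI d c)

lemma integrable_one_dim (n : ℕ) {ε : ℝ} (hε : 0 < ε) :
    Integrable (fun x : ℝ => (1 + |x|) ^ n * Real.exp (-ε * x ^ 2)) := by
  have hmeas : Measurable fun x : ℝ => (1 + |x|) ^ n * Real.exp (-ε * x ^ 2) := by
    apply Measurable.mul
    · exact (measurable_const.add measurable_abs).pow_const n
    · exact ((measurable_id.pow_const 2).const_mul (-ε)).exp
  have h2 : Integrable (fun x : ℝ => x ^ (2 * n) * Real.exp (-ε * x ^ 2)) := by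
    have hs : (-1:ℝ) < ((2 * n : ℕ) : ℝ) := by
      have : (0:ℝ) ≤ ((2 * n : ℕ) : ℝ) := Nat.cast_nonneg _
      linarith
    have := integrable_rpow_mul_exp_neg_mul_sq hε hs
    simpa only [Real.rpow_natCast] using this
  have hint : Integrable (fun x : ℝ =>
      (2:ℝ) ^ n * (2 * Real.exp (-ε * x ^ 2)) + (2:ℝ) ^ n * (x ^ (2 * n) * Real.exp (-ε * x ^ 2))) :=
    (((integrable_exp_neg_mul_sq hε).const_mul 2).const_mul _).add (h2.const_mul _)
  apply hint.mono' hmeas.aestronglyMeasurable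
  filter_upwards with x
  rw [Real.norm_eq_abs, abs_of_nonneg (by positivity)]
  have hx2n : (0:ℝ) ≤ x ^ (2 * n) := by
    rw [pow_mul]; positivity
  have habs : |x| ^ n ≤ 1 + x ^ (2 * n) := by
    rcases le_total |x| 1 with h | h
    · have : |x| ^ n ≤ 1 := pow_le_one₀ (abs_nonneg x) h
      linarith
    · have h1 : |x| ^ n ≤ |x| ^ (2 * n) := pow_le_pow_right₀ h (by omega)
      have h2' : |x| ^ (2 * n) = x ^ (2 * n) := by
        rw [← abs_pow, abs_of_nonneg hx2n]
      linarith [h1, h2'.le]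
  have hb : (1 + |x|) ^ n ≤ 2 ^ n * (2 + x ^ (2 * n)) := by
    have h1 : (1 + |x|) ≤ 2 * max 1 |x| := by
      rcases le_total |x| 1 with h | h
      · rw [max_eq_left h]; linarith
      · rw [max_eq_right h]; linarith [abs_nonneg x]
    calc (1 + |x|) ^ n ≤ (2 * max 1 |x|) ^ n :=
          pow_le_pow_left₀ (by positivity) h1 n
      _ = 2 ^ n * (max 1 |x|) ^ n := by rw [mul_pow]
      _ ≤ 2 ^ n * (2 + x ^ (2 * n)) := by
          apply mul_le_mul_of_nonneg_left _ (by positivity)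
          rcases le_total |x| 1 with h | h
          · rw [max_eq_left h]; simp only [one_pow]; linarith
          · rw [max_eq_right h]
            linarith [habs]
  have hexp : (0:ℝ) < Real.exp (-ε * x ^ 2) := Real.exp_pos _
  calc (1 + |x|) ^ n * Real.exp (-ε * x ^ 2)
      ≤ (2 ^ n * (2 + x ^ (2 * n))) * Real.exp (-ε * x ^ 2) :=
        mul_le_mul_of_nonneg_right hb hexp.le
    _ = 2 ^ n * (2 * Real.exp (-ε * x ^ 2)) + 2 ^ n * (x ^ (2 * n) * Real.exp (-ε * x ^ 2)) := by
        ring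

lemma integrable_bound (d n : ℕ) {ε : ℝ} (hε : 0 < ε) :
    Integrable (fun lam : Fin d → ℝ =>
      ∏ j, ((1 + |lam j|) ^ n * Real.exp (-ε * (lam j) ^ 2))) :=
  Integrable.fintype_prod (𝕜 := ℝ) fun _ => integrable_one_dim n hε

lemma indicator_le_one {α : Type*} (s : Set α) (x : α) :
    Set.indicator s (fun _ => (1:ℝ)) x ≤ 1 := by
  classical
  rw [Set.indicator_apply]
  split_ifs <;> norm_num

lemma indicator_nonneg' {α : Type*} (s : Set α) (x : α) :
    0 ≤ Set.indicator s (fun _ => (1:ℝ)) x :=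
  Set.indicator_nonneg (fun _ _ => by norm_num) _

lemma exponent_bound (d : ℕ) {c : ℝ} (hc : c ∈ Set.Icc (1/4 : ℝ) (3/4)) (lam : Fin d → ℝ) :
    -(∑ j, lam j ^ 2) / 2 + c * (∑ j, lam j) ^ 2 / (2 * (1 + d * c))
      ≤ -(2 / (4 + 3 * (d:ℝ))) * ∑ j, lam j ^ 2 := by
  obtain ⟨hc1, hc2⟩ := hc
  set S := ∑ j, lam j ^ 2 with hS
  set T := ∑ j, lam j with hT
  have hSnn : 0 ≤ S := Finset.sum_nonneg fun j _ => sq_nonneg _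
  have hd0 : (0:ℝ) ≤ d := Nat.cast_nonneg d
  have hden : (0:ℝ) < 1 + d * c := by nlinarith
  have hTS : T ^ 2 ≤ d * S := by
    have := sq_sum_le_card_mul_sum_sq (s := (Finset.univ : Finset (Fin d))) (f := lam)
    simpa [hS, hT] using this
  have hpos : (0:ℝ) < 2 * (1 + d * c) := by positivity
  have h1 : c * T ^ 2 / (2 * (1 + d * c)) ≤ c * (d * S) / (2 * (1 + d * c)) := by
    gcongr
    all_goals first | exact hTS | linarith
  have h2 : c * (d * S) / (2 * (1 + d * c)) ≤ 3 * d * S / (2 * (4 + 3 * (d:ℝ))) := by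
    rw [div_le_div_iff₀ (by positivity) (by positivity)]
    nlinarith [mul_nonneg (mul_nonneg (show (0:ℝ) ≤ 3 - 4 * c by linarith) hd0) hSnn]
  have h3 : -S / 2 + 3 * (d:ℝ) * S / (2 * (4 + 3 * (d:ℝ))) = -(2 / (4 + 3 * (d:ℝ))) * S := by
    have hne : (4 + 3 * (d:ℝ)) ≠ 0 := by positivity
    field_simp
    ring
  linarith

lemma prod_bound (d : ℕ) (lam : Fin d → ℝ) :
    PiAbs d lam * DeltaV d lam ≤ (∏ j, (1 + |lam j|)) ^ (2 * d + 1) := by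
  set P := ∏ j, (1 + |lam j|) with hP
  have hPj : ∀ j, (0:ℝ) ≤ 1 + |lam j| := fun j => by positivity
  have hPnn : 0 ≤ P := Finset.prod_nonneg fun j _ => hPj j
  have h1 : PiAbs d lam ≤ P :=
    Finset.prod_le_prod (fun j _ => abs_nonneg _) (fun j _ => by linarith [abs_nonneg (lam j)])
  have h2 : DeltaV d lam ≤ P ^ (2 * d) := by
    have hstep : DeltaV d lam ≤ ∏ h : Fin d, ∏ k : Fin d, ((1 + |lam h|) * (1 + |lam k|)) := by
      apply Finset.prod_le_prod
      · intro h _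
        exact Finset.prod_nonneg fun k _ => by split_ifs; exacts [abs_nonneg _, by norm_num]
      · intro h _
        apply Finset.prod_le_prod
        · intro k _; split_ifs; exacts [abs_nonneg _, by norm_num]
        · intro k _
          split_ifs
          · calc |lam h - lam k| ≤ |lam h| + |lam k| := abs_sub _ _
              _ ≤ (1 + |lam h|) * (1 + |lam k|) := by nlinarith [abs_nonneg (lam h), abs_nonneg (lam k)]
          · nlinarith [abs_nonneg (lam h), abs_nonneg (lam k)]
    have heq : ∏ h : Fin d, ∏ k : Fin d, ((1 + |lam h|) * (1 + |lam k|)) = P ^ (2 * d) := by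
      have hinner : ∀ h : Fin d, ∏ k : Fin d, ((1 + |lam h|) * (1 + |lam k|))
          = (1 + |lam h|) ^ d * P := by
        intro h
        rw [Finset.prod_mul_distrib, Finset.prod_const, Finset.card_univ, Fintype.card_fin]
      rw [Finset.prod_congr rfl (fun h _ => hinner h), Finset.prod_mul_distrib,
        Finset.prod_const, Finset.card_univ, Fintype.card_fin, Finset.prod_pow, ← hP,
        two_mul, pow_add]
    exact hstep.trans heq.le
  calc PiAbs d lam * DeltaV d lam ≤ P * P ^ (2 * d) :=
        mul_le_mul h1 h2 (DeltaV_nonneg d lam) hPnn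
    _ = P ^ (2 * d + 1) := by ring

lemma bound_pointwise (d i : ℕ) {c : ℝ} (hc : c ∈ Set.Icc (1/4 : ℝ) (3/4)) (lam : Fin d → ℝ) :
    PiAbs d lam * Set.indicator (Oi d i) (fun _ => 1) lam * fGOI d c lam
      ≤ (Kd d)⁻¹ * ∏ j, ((1 + |lam j|) ^ (2 * d + 1)
          * Real.exp (-(2 / (4 + 3 * (d:ℝ))) * (lam j) ^ 2)) := by
  have hd0 : (0:ℝ) ≤ d := Nat.cast_nonneg d
  have hc1 := hc.1
  have hsq : (1:ℝ) ≤ Real.sqrt (1 + d * c) := by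
    have h := Real.sqrt_le_sqrt (show (1:ℝ) ≤ 1 + d * c by nlinarith)
    simpa using h
  have hKS : (Kd d * Real.sqrt (1 + d * c))⁻¹ ≤ (Kd d)⁻¹ := by
    apply inv_anti₀ (Kd_pos d)
    nlinarith [Kd_pos d]
  set E := Real.exp (-(∑ j, lam j ^ 2) / 2 + c * (∑ j, lam j) ^ 2 / (2 * (1 + d * c))) with hE
  have hEb : E ≤ Real.exp (-(2 / (4 + 3 * (d:ℝ))) * ∑ j, lam j ^ 2) :=
    Real.exp_le_exp.mpr (exponent_bound d hc lam)
  have e1 : PiAbs d lam * Set.indicator (Oi d i) (fun _ => 1) lam * fGOI d c lam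
      ≤ PiAbs d lam * fGOI d c lam := by
    have := mul_le_of_le_one_right (PiAbs_nonneg d lam) (indicator_le_one (Oi d i) lam)
    exact mul_le_mul_of_nonneg_right this (fGOI_nonneg d c lam)
  have e2 : fGOI d c lam ≤ (Kd d)⁻¹ * DeltaV d lam
      * Real.exp (-(2 / (4 + 3 * (d:ℝ))) * ∑ j, lam j ^ 2) := by
    rw [fGOI, ← hE]
    have t1 : (Kd d * Real.sqrt (1 + d * c))⁻¹ * DeltaV d lam * E
        * Set.indicator {x : Fin d → ℝ | Monotone x} (fun _ => 1) lam
        ≤ (Kd d * Real.sqrt (1 + d * c))⁻¹ * DeltaV d lam * E := by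
      apply mul_le_of_le_one_right _ (indicator_le_one _ lam)
      have h0 : (0:ℝ) ≤ (Kd d * Real.sqrt (1 + d * c))⁻¹ :=
        inv_nonneg.mpr (mul_nonneg (Kd_pos d).le (Real.sqrt_nonneg _))
      exact mul_nonneg (mul_nonneg h0 (DeltaV_nonneg d lam)) (Real.exp_pos _).le
    refine t1.trans ?_
    have h0 : (0:ℝ) ≤ (Kd d * Real.sqrt (1 + d * c))⁻¹ :=
      inv_nonneg.mpr (mul_nonneg (Kd_pos d).le (Real.sqrt_nonneg _))
    calc (Kd d * Real.sqrt (1 + d * c))⁻¹ * DeltaV d lam * E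
        ≤ (Kd d)⁻¹ * DeltaV d lam * E := by
          apply mul_le_mul_of_nonneg_right _ (Real.exp_pos _).le
          exact mul_le_mul_of_nonneg_right hKS (DeltaV_nonneg d lam)
      _ ≤ (Kd d)⁻¹ * DeltaV d lam * Real.exp (-(2 / (4 + 3 * (d:ℝ))) * ∑ j, lam j ^ 2) := by
          apply mul_le_mul_of_nonneg_left hEb
          exact mul_nonneg (inv_nonneg.mpr (Kd_pos d).le) (DeltaV_nonneg d lam)
  calc PiAbs d lam * Set.indicator (Oi d i) (fun _ => 1) lam * fGOI d c lam
      ≤ PiAbs d lam * fGOI d c lam := e1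
    _ ≤ PiAbs d lam * ((Kd d)⁻¹ * DeltaV d lam
          * Real.exp (-(2 / (4 + 3 * (d:ℝ))) * ∑ j, lam j ^ 2)) :=
        mul_le_mul_of_nonneg_left e2 (PiAbs_nonneg d lam)
    _ = (Kd d)⁻¹ * (PiAbs d lam * DeltaV d lam)
          * Real.exp (-(2 / (4 + 3 * (d:ℝ))) * ∑ j, lam j ^ 2) := by ring
    _ ≤ (Kd d)⁻¹ * (∏ j, (1 + |lam j|)) ^ (2 * d + 1)
          * Real.exp (-(2 / (4 + 3 * (d:ℝ))) * ∑ j, lam j ^ 2) := by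
        apply mul_le_mul_of_nonneg_right _ (Real.exp_pos _).le
        exact mul_le_mul_of_nonneg_left (prod_bound d lam) (inv_nonneg.mpr (Kd_pos d).le)
    _ = (Kd d)⁻¹ * ∏ j, ((1 + |lam j|) ^ (2 * d + 1)
          * Real.exp (-(2 / (4 + 3 * (d:ℝ))) * (lam j) ^ 2)) := by
        rw [Finset.prod_mul_distrib, ← Real.exp_sum, ← Finset.mul_sum, Finset.prod_pow]
        ring

lemma integrand_nonneg (d i : ℕ) (c : ℝ) (lam : Fin d → ℝ) :
    0 ≤ PiAbs d lam * Set.indicator (Oi d i) (fun _ => 1) lam * fGOI d c lam :=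
  mul_nonneg (mul_nonneg (PiAbs_nonneg d lam) (indicator_nonneg' _ _)) (fGOI_nonneg d c lam)

lemma contAt_fGOI (d : ℕ) (lam : Fin d → ℝ) :
    ContinuousAt (fun c => fGOI d c lam) (1/2 : ℝ) := by
  have hden : (0:ℝ) < 1 + (d:ℝ) * (1/2) := by positivity
  have hone : ContinuousAt (fun c : ℝ => 1 + (d:ℝ) * c) (1/2) := by fun_prop
  have h1 : ContinuousAt (fun c : ℝ => (Kd d * Real.sqrt (1 + d * c))⁻¹) (1/2) := by
    apply ContinuousAt.inv₀
    · exact continuousAt_const.mul (Real.continuous_sqrt.continuousAt.comp hone)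
    · have hs : (0:ℝ) < Real.sqrt (1 + (d:ℝ) * (1/2)) := Real.sqrt_pos.mpr hden
      exact ne_of_gt (mul_pos (Kd_pos d) hs)
  have h2 : ContinuousAt (fun c : ℝ =>
      Real.exp (-(∑ j, lam j ^ 2) / 2 + c * (∑ j, lam j) ^ 2 / (2 * (1 + d * c)))) (1/2) := by
    apply Real.continuous_exp.continuousAt.comp
    apply ContinuousAt.add continuousAt_const
    apply ContinuousAt.div (by fun_prop) (by fun_prop)
    positivity
  unfold fGOI
  exact ((h1.mul continuousAt_const).mul h2).mul continuousAt_const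

lemma contAt_GOIint (d i : ℕ) : ContinuousAt (GOIint d i) (1/2 : ℝ) := by
  unfold GOIint
  have hd3 : (0:ℝ) < 2 / (4 + 3 * (d:ℝ)) := by positivity
  apply MeasureTheory.continuousAt_of_dominated
    (bound := fun lam : Fin d → ℝ => (Kd d)⁻¹ * ∏ j, ((1 + |lam j|) ^ (2 * d + 1)
      * Real.exp (-(2 / (4 + 3 * (d:ℝ))) * (lam j) ^ 2)))
  · filter_upwards with c
    exact (measurable_integrand d i c).aestronglyMeasurable
  · have hmem : Set.Icc (1/4 : ℝ) (3/4) ∈ 𝓝 (1/2 : ℝ) := Icc_mem_nhds (by norm_num) (by norm_num)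
    filter_upwards [hmem] with c hc
    filter_upwards with lam
    rw [Real.norm_eq_abs, abs_of_nonneg (integrand_nonneg d i c lam)]
    exact bound_pointwise d i hc lam
  · exact (integrable_bound d (2 * d + 1) hd3).const_mul _
  · filter_upwards with lam
    exact continuousAt_const.mul (contAt_fGOI d lam)

/-- High-disorder regime of Theorem 3.2: if `κ'(1) > 1` then `κ'(1)^{−Ld/2}·M_i(L)`
converges to `A_i·(η_1(κ'(1)−1))^{−d/2}`. -/
theorem statement2 (d i : ℕ) (hd : 2 ≤ d) (hi : i ≤ d) (κ : ℝ → ℝ)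
    (hsmooth : ContDiff ℝ 2 κ) (hfix : κ 1 = 1)
    (hpos1 : 0 < deriv κ 1) (hpos2 : 0 < deriv (deriv κ) 1)
    (hhigh : 1 < deriv κ 1) :
    Tendsto (fun L : ℕ => deriv κ 1 ^ (-((L : ℝ) * d) / 2) * Mcrit d i κ L) atTop
      (nhds ((2 * Real.sqrt π / Real.Gamma (((d : ℝ) + 1) / 2) * GOIint d i (1 / 2)) *
        (deriv κ 1 / deriv (deriv κ) 1 * (deriv κ 1 - 1)) ^ (-(d : ℝ) / 2))) := by
  set a := deriv κ 1 with ha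
  set b := deriv (deriv κ) 1 with hb
  have ha0 : (0:ℝ) < a := lt_trans one_pos hhigh
  have ha1 : a ≠ 1 := ne_of_gt hhigh
  have hb0 : b ≠ 0 := ne_of_gt hpos2
  set C := 2 * Real.sqrt π / Real.Gamma (((d : ℝ) + 1) / 2) with hC
  set m := a * (a - 1) / b with hm
  have hm0 : 0 < m := by
    apply div_pos _ hpos2
    nlinarith
  -- nonnegativity of etaL
  have hetann : ∀ L : ℕ, 0 ≤ etaL κ L := by
    intro L
    rw [etaL, deriv_iter_one hsmooth hfix L]
    rcases eq_or_ne (deriv (deriv (κ^[L])) 1) 0 with h | h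
    · rw [h, div_zero]
    · apply div_nonneg (pow_nonneg ha0.le L)
      have h2 := deriv2_iter hsmooth hfix L
      have : deriv (deriv (κ^[L])) 1
          = b * a ^ L * (∑ k ∈ Finset.range L, a ^ k) / a := by
        rw [eq_div_iff (ne_of_gt ha0)]
        linear_combination h2
      rw [this]
      have hsum : (0:ℝ) ≤ ∑ k ∈ Finset.range L, a ^ k :=
        Finset.sum_nonneg fun k _ => pow_nonneg ha0.le k
      positivity
  -- the limit of a^L * etaL
  have hkey : Tendsto (fun L : ℕ => a ^ L * etaL κ L) atTop (𝓝 m) := by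
    have key : ∀ L : ℕ, 1 ≤ L → a ^ L * etaL κ L
        = m * (1 - (a⁻¹) ^ L)⁻¹ := by
      intro L hL
      have hgeom : ∑ k ∈ Finset.range L, a ^ k = (a ^ L - 1) / (a - 1) := geom_sum_eq ha1 L
      have haL1 : 1 < a ^ L := one_lt_pow₀ hhigh (by omega)
      have haLne : a ^ L - 1 ≠ 0 := by linarith
      have hBL : deriv (deriv (κ^[L])) 1 = b * a ^ L * ((a ^ L - 1) / (a - 1)) / a := by
        have h := deriv2_iter hsmooth hfix L
        rw [hgeom] at h
        rw [eq_div_iff (ne_of_gt ha0)]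
        linear_combination h
      rw [etaL, deriv_iter_one hsmooth hfix L, hBL]
      have h1 : (1:ℝ) - (a⁻¹) ^ L = (a ^ L - 1) / a ^ L := by
        field_simp
        rw [one_div, sub_mul, ← mul_pow, inv_mul_cancel₀ ha0.ne', one_pow, one_mul]
      rw [h1, hm]
      have haLpos : (0:ℝ) < a ^ L := pow_pos ha0 L
      field_simp
      ring
    have hlim : Tendsto (fun L : ℕ => m * (1 - (a⁻¹) ^ L)⁻¹) atTop (𝓝 m) := by
      have h1 : Tendsto (fun L : ℕ => (a⁻¹) ^ L) atTop (𝓝 0) := by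
        apply tendsto_pow_atTop_nhds_zero_of_lt_one (by positivity)
        rw [inv_lt_one_iff₀]; right; exact hhigh
      have h2 : Tendsto (fun L : ℕ => (1 - (a⁻¹) ^ L)⁻¹) atTop (𝓝 1) := by
        have := ((tendsto_const_nhds (x := (1:ℝ))).sub h1).inv₀ (by norm_num)
        simpa using this
      have := h2.const_mul m
      simpa using this
    apply hlim.congr'
    filter_upwards [eventually_ge_atTop 1] with L hL
    exact (key L hL).symm
  -- etaL tends to 0
  have heta0 : Tendsto (fun L : ℕ => etaL κ L) atTop (𝓝 0) := by
    have h1 : Tendsto (fun L : ℕ => (a ^ L * etaL κ L) * (a⁻¹) ^ L) atTop (𝓝 (m * 0)) := by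
      apply hkey.mul
      apply tendsto_pow_atTop_nhds_zero_of_lt_one (by positivity)
      rw [inv_lt_one_iff₀]; right; exact hhigh
    rw [mul_zero] at h1
    apply h1.congr
    intro L
    have : a ^ L ≠ 0 := pow_ne_zero L (ne_of_gt ha0)
    field_simp
    rw [one_div, mul_right_comm, ← mul_pow, mul_inv_cancel₀ ha0.ne', one_pow, one_mul]
  -- c_L tends to 1/2
  have hcL : Tendsto (fun L : ℕ => (1 + etaL κ L) / 2) atTop (𝓝 (1/2 : ℝ)) := by
    have := (heta0.const_add 1).div_const 2
    simpa using this
  -- GOIint part converges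
  have hG : Tendsto (fun L : ℕ => GOIint d i ((1 + etaL κ L) / 2)) atTop
      (𝓝 (GOIint d i (1/2))) :=
    (contAt_GOIint d i).tendsto.comp hcL
  -- rpow part converges
  have hR : Tendsto (fun L : ℕ => (a ^ L * etaL κ L) ^ (-(d:ℝ) / 2)) atTop
      (𝓝 (m ^ (-(d:ℝ) / 2))) :=
    ((Real.continuousAt_rpow_const m (-(d:ℝ)/2) (Or.inl (ne_of_gt hm0))).tendsto).comp hkey
  -- assemble
  have heq : ∀ L : ℕ, a ^ (-((L : ℝ) * d) / 2) * Mcrit d i κ L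
      = C * (a ^ L * etaL κ L) ^ (-(d:ℝ) / 2) * GOIint d i ((1 + etaL κ L) / 2) := by
    intro L
    rw [Mcrit, ← hC]
    have h1 : a ^ (-((L : ℝ) * d) / 2) = (a ^ L) ^ (-(d:ℝ) / 2) := by
      rw [show -((L:ℝ) * d) / 2 = (L:ℝ) * (-(d:ℝ) / 2) by ring,
        Real.rpow_mul ha0.le, Real.rpow_natCast]
    have h2 : (a ^ L * etaL κ L) ^ (-(d:ℝ) / 2)
        = (a ^ L) ^ (-(d:ℝ) / 2) * (etaL κ L) ^ (-(d:ℝ) / 2) :=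
      Real.mul_rpow (pow_nonneg ha0.le L) (hetann L)
    rw [h2, h1]
    ring
  have hfinal : Tendsto (fun L : ℕ =>
      C * (a ^ L * etaL κ L) ^ (-(d:ℝ) / 2) * GOIint d i ((1 + etaL κ L) / 2)) atTop
      (𝓝 (C * m ^ (-(d:ℝ) / 2) * GOIint d i (1/2))) :=
    (hR.const_mul C).mul hG
  have hgoal : (C * GOIint d i (1/2)) * (a / b * (a - 1)) ^ (-(d:ℝ) / 2)
      = C * m ^ (-(d:ℝ) / 2) * GOIint d i (1/2) := by
    rw [show a / b * (a - 1) = m by rw [hm]; ring]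
    ring
  rw [hgoal]
  exact hfinal.congr fun L => (heq L).symm
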